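/- (Evolution of the energy density.) Suppose on [t₀,T]: g^{ab}(t) is a differentiable symmetric positive definite matrix-valued function and k^{ab}(t) a continuous symmetric matrix-valued function with dg^{ab}/dt = −2k^{ab}. Let F : [t₀,T]×ℝ³ → [0,∞) be measurable, differentiable in t, such that differentiation under the integral sign is justified (e.g. ⟨p⟩·F and ⟨p⟩·|∂_t F| are dominated, locally uniformly in t, by integrable functions of p), and such that ∫_{ℝ³} ∂_tF(t,p) · p⁰(t,p) dp = 0 for all t. Define ρ(t) = (det g(t))^{−1/2} ∫_{ℝ³} F(t,p) p⁰(t,p) dp and S_{ab}(t) = (det g(t))^{−1/2} ∫_{ℝ³} F(t,p) (p_a p_b / p⁰(t,p)) dp. Then ρ is differentiable and dρ/dt = −kρ − k^{ab}S_{ab}, where k = g_{ab}k^{ab}. -/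

import Mathlib

open Matrix Real Set MeasureTheory Topology Filter Metric

noncomputable section

/-- 3×3 real matrices. -/
abbrev Mat3 := Matrix (Fin 3) (Fin 3) ℝ
/-- Momentum vectors in ℝ³. -/
abbrev V3 := Fin 3 → ℝ

/-- The quadratic form `g^{ab} p_a p_b = pᵀ G p`. -/
def quadG (G : Mat3) (p : V3) : ℝ := p ⬝ᵥ G *ᵥ p

/-- The particle energy `p⁰ = √(1 + g^{ab} p_a p_b)`. -/
def p0 (G : Mat3) (p : V3) : ℝ := Real.sqrt (1 + quadG G p)

/-- The Japanese bracket `⟨p⟩ = √(1+|p|²)`. -/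
def jap (p : V3) : ℝ := Real.sqrt (1 + ∑ i, p i ^ 2)

/-- The trace `k = g_{ab} k^{ab}`. -/
def trK (G K : Mat3) : ℝ := ∑ a, ∑ b, G⁻¹ a b * K a b

/-- The energy density `ρ = (det g)^{−1/2} ∫ F p⁰ dp`; note
`(det g)^{−1/2} = √(det G)` where `(g_{ab}) = G⁻¹`. -/
def rhoF (G : Mat3) (F : V3 → ℝ) : ℝ :=
  Real.sqrt G.det * ∫ p : V3, F p * p0 G p

/-- The stress with lower indices, `S_{ab} = (det g)^{−1/2} ∫ F p_a p_b / p⁰ dp`. -/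
def SlowF (G : Mat3) (F : V3 → ℝ) (a b : Fin 3) : ℝ :=
  Real.sqrt G.det * ∫ p : V3, F p * (p a * p b / p0 G p)

section Helpers

lemma quadG_eq (G : Mat3) (p : V3) : quadG G p = ∑ a, ∑ b, p a * (G a b * p b) := by
  simp [quadG, dotProduct, mulVec, Finset.mul_sum]

lemma sq_sum_nonneg (p : V3) : (0:ℝ) ≤ ∑ i, p i ^ 2 :=
  Finset.sum_nonneg fun i _ => sq_nonneg _

lemma one_le_jap (p : V3) : 1 ≤ jap p := by
  rw [jap]
  nlinarith [Real.sq_sqrt (by linarith [sq_sum_nonneg p] : (0:ℝ) ≤ 1 + ∑ i, p i ^ 2),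
    Real.sqrt_nonneg (1 + ∑ i, p i ^ 2), sq_sum_nonneg p]

lemma jap_pos (p : V3) : 0 < jap p := lt_of_lt_of_le one_pos (one_le_jap p)

lemma jap_sq (p : V3) : jap p ^ 2 = 1 + ∑ i, p i ^ 2 := by
  rw [jap, Real.sq_sqrt (by linarith [sq_sum_nonneg p])]

lemma abs_mul_le_sum_sq (p : V3) (a b : Fin 3) : |p a * p b| ≤ ∑ i, p i ^ 2 := by
  have h1 : ∀ c : Fin 3, |p c| ≤ Real.sqrt (∑ i, p i ^ 2) := fun c => by
    rw [← Real.sqrt_sq_eq_abs]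
    exact Real.sqrt_le_sqrt (Finset.single_le_sum (f := fun i => p i ^2) (fun i _ => sq_nonneg _) (Finset.mem_univ c))
  calc |p a * p b| = |p a| * |p b| := abs_mul _ _
    _ ≤ Real.sqrt (∑ i, p i ^ 2) * Real.sqrt (∑ i, p i ^ 2) :=
        mul_le_mul (h1 a) (h1 b) (abs_nonneg _) (Real.sqrt_nonneg _)
    _ = ∑ i, p i ^ 2 := Real.mul_self_sqrt (sq_sum_nonneg p)

lemma abs_quadG_le (G : Mat3) (p : V3) :
    |quadG G p| ≤ (∑ a, ∑ b, |G a b|) * (∑ i, p i ^ 2) := by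
  rw [quadG_eq, Finset.sum_mul]
  refine (Finset.abs_sum_le_sum_abs _ _).trans (Finset.sum_le_sum fun a _ => ?_)
  rw [Finset.sum_mul]
  refine (Finset.abs_sum_le_sum_abs _ _).trans (Finset.sum_le_sum fun b _ => ?_)
  have : |p a * (G a b * p b)| = |G a b| * |p a * p b| := by
    rw [← abs_mul]; ring_nf
  rw [this]
  exact mul_le_mul_of_nonneg_left (abs_mul_le_sum_sq p a b) (abs_nonneg _)

lemma quadG_smul (G : Mat3) (p : V3) (c : ℝ) : quadG G (c • p) = c^2 * quadG G p := by
  simp only [quadG_eq, Pi.smul_apply, smul_eq_mul, Finset.mul_sum]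
  refine Finset.sum_congr rfl fun a _ => Finset.sum_congr rfl fun b _ => by ring

lemma posdef_lower {A : Mat3} (hA : A.PosDef) :
    ∃ lam : ℝ, 0 < lam ∧ ∀ p : V3, lam * (∑ i, p i ^ 2) ≤ quadG A p := by
  set S : Set V3 := {p | ∑ i, p i ^ 2 = 1} with hS
  have hSc : IsCompact S := by
    apply Metric.isCompact_of_isClosed_isBounded
    · exact isClosed_eq (by continuity) continuous_const
    · rw [Metric.isBounded_iff_subset_closedBall 0]
      refine ⟨1, fun p hp => ?_⟩
      simp only [Metric.mem_closedBall, dist_zero_right]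
      rw [pi_norm_le_iff_of_nonneg (by norm_num : (0:ℝ) ≤ 1)]
      intro i
      rw [Real.norm_eq_abs, ← Real.sqrt_one, ← Real.sqrt_sq_eq_abs]
      refine Real.sqrt_le_sqrt ?_
      have h := Finset.single_le_sum (f := fun j => p j ^ 2) (fun j _ => sq_nonneg _)
        (Finset.mem_univ i)
      rw [hp.out] at h
      simpa using h
  have hSne : S.Nonempty := by
    refine ⟨fun i => if i = 0 then 1 else 0, ?_⟩
    simp only [hS, mem_setOf_eq, Fin.sum_univ_three]
    norm_num [show (1:Fin 3) ≠ 0 by decide, show (2:Fin 3) ≠ 0 by decide]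
  have hcont : ContinuousOn (quadG A) S := by
    apply Continuous.continuousOn
    rw [show quadG A = fun p => ∑ a, ∑ b, p a * (A a b * p b) from funext (quadG_eq A)]
    continuity
  obtain ⟨x, hxS, hxmin⟩ := hSc.exists_isMinOn hSne hcont
  have hxne : x ≠ 0 := by
    intro h; rw [h] at hxS
    have h0 : (0:ℝ) = 1 := by simpa [hS, Fin.sum_univ_three] using hxS
    norm_num at h0
  refine ⟨quadG A x, hA.dotProduct_mulVec_pos hxne, fun p => ?_⟩
  rcases eq_or_ne p 0 with rfl | hp
  · simp [quadG_eq]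
  · have hsum : 0 < ∑ i, p i ^ 2 := by
      obtain ⟨i, hi⟩ : ∃ i, p i ≠ 0 := by
        by_contra h; push_neg at h; exact hp (funext h)
      have h1 : 0 < p i ^ 2 := by positivity
      have h2 : p i ^ 2 ≤ ∑ j, p j ^ 2 := by
        simpa using Finset.single_le_sum (f := fun j => p j ^ 2) (fun j _ => sq_nonneg _)
          (Finset.mem_univ i)
      linarith
    set r := Real.sqrt (∑ i, p i ^ 2) with hr
    have hr2 : r ^ 2 = ∑ i, p i ^ 2 := Real.sq_sqrt hsum.le
    have hrpos : 0 < r := Real.sqrt_pos.2 hsum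
    have hmem : (r⁻¹ • p) ∈ S := by
      simp only [hS, mem_setOf_eq, Pi.smul_apply, smul_eq_mul, mul_pow, ← Finset.mul_sum,
        inv_pow, hr2]
      exact inv_mul_cancel₀ hsum.ne'
    have hle := isMinOn_iff.mp hxmin _ hmem
    rw [quadG_smul, inv_pow, hr2] at hle
    have h3 := mul_le_mul_of_nonneg_right hle hsum.le
    calc quadG A x * (∑ i, p i ^ 2) ≤ (∑ i, p i ^ 2)⁻¹ * quadG A p * (∑ i, p i ^ 2) := h3
      _ = quadG A p := by field_simp

/-- Clamp to the interval `[t₀, T]`. -/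
def clampI (t₀ T s : ℝ) : ℝ := max t₀ (min s T)

lemma clampI_mem {t₀ T : ℝ} (hT : t₀ ≤ T) (s : ℝ) : clampI t₀ T s ∈ Icc t₀ T :=
  ⟨le_max_left _ _, max_le hT (min_le_right _ _)⟩

lemma clampI_of_mem {t₀ T s : ℝ} (hs : s ∈ Icc t₀ T) : clampI t₀ T s = s := by
  rw [clampI, min_eq_left hs.2, max_eq_right hs.1]

lemma clampI_of_le {t₀ T s : ℝ} (hT : t₀ ≤ T) (hs : s ≤ t₀) : clampI t₀ T s = t₀ := by
  rw [clampI, min_eq_left (hs.trans hT), max_eq_left hs]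

lemma clampI_of_ge {t₀ T s : ℝ} (hT : t₀ ≤ T) (hs : T ≤ s) : clampI t₀ T s = T := by
  rw [clampI, min_eq_right hs, max_eq_right hT]

lemma continuous_clampI (t₀ T : ℝ) : Continuous (clampI t₀ T) :=
  continuous_const.max ((continuous_id.min continuous_const))

/-- The affine extension of `f` beyond `[t₀,T]` is differentiable everywhere with
derivative `f' ∘ clamp`. -/
lemma extDeriv' {t₀ T : ℝ} (hT : t₀ < T) (f f' : ℝ → ℝ)
    (hf : ∀ τ ∈ Icc t₀ T, HasDerivWithinAt f (f' τ) (Icc t₀ T) τ) (s : ℝ) :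
    HasDerivAt (fun σ => f (clampI t₀ T σ) + (σ - clampI t₀ T σ) * f' (clampI t₀ T σ))
      (f' (clampI t₀ T s)) s := by
  set c := clampI t₀ T with hc
  set ef : ℝ → ℝ := fun σ => f (c σ) + (σ - c σ) * f' (c σ) with hef
  have hLa : ∀ a y : ℝ, HasDerivAt (fun σ => f a + (σ - a) * f' a) (f' a) y := by
    intro a y
    simpa using (((hasDerivAt_id y).sub_const a).mul_const (f' a)).const_add (f a)
  have hef_eq_L_le : ∀ a σ : ℝ, σ ≤ t₀ → ef σ = f t₀ + (σ - t₀) * f' t₀ := by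
    intro a σ hσ; simp only [hef, hc, clampI_of_le hT.le hσ]
  have hef_eq_L_ge : ∀ a σ : ℝ, T ≤ σ → ef σ = f T + (σ - T) * f' T := by
    intro a σ hσ; simp only [hef, hc, clampI_of_ge hT.le hσ]
  have hef_eq_f : ∀ σ ∈ Icc t₀ T, ef σ = f σ := by
    intro σ hσ; simp only [hef, hc, clampI_of_mem hσ]; ring
  rcases lt_trichotomy s t₀ with hs | rfl | hs
  · -- s < t₀
    rw [hc, clampI_of_le hT.le hs.le]
    refine (hLa t₀ s).congr_of_eventuallyEq ?_
    filter_upwards [Iio_mem_nhds hs] with σ hσ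
    exact hef_eq_L_le t₀ σ (le_of_lt hσ)
  · -- s = t₀
    rw [hc, clampI_of_le hT.le le_rfl]
    rw [← hasDerivWithinAt_univ (𝕜 := ℝ), ← Iic_union_Ici (a := s)]
    refine HasDerivWithinAt.union ?_ ?_
    · refine (hLa s s).hasDerivWithinAt.congr (fun y hy => hef_eq_L_le s y hy) ?_
      exact hef_eq_L_le s s le_rfl
    · have h1 : HasDerivWithinAt f (f' s) (Ici s) s :=
        (hf s ⟨le_rfl, hT.le⟩).mono_of_mem_nhdsWithin
          (by rw [← nhdsWithin_Icc_eq_nhdsGE hT]; exact self_mem_nhdsWithin)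
      refine h1.congr_of_eventuallyEq ?_ (hef_eq_f s ⟨le_rfl, hT.le⟩)
      have hmem : Icc s T ∈ 𝓝[Ici s] s := by
        rw [← nhdsWithin_Icc_eq_nhdsGE hT]; exact self_mem_nhdsWithin
      filter_upwards [hmem] with σ hσ
      exact hef_eq_f σ hσ
  · rcases lt_trichotomy s T with hs2 | rfl | hs2
    · -- t₀ < s < T
      rw [hc, clampI_of_mem ⟨hs.le, hs2.le⟩]
      refine ((hf s ⟨hs.le, hs2.le⟩).hasDerivAt (Icc_mem_nhds hs hs2)).congr_of_eventuallyEq ?_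
      filter_upwards [Icc_mem_nhds hs hs2] with σ hσ
      exact hef_eq_f σ hσ
    · -- s = T
      rw [hc, clampI_of_ge hT.le le_rfl]
      rw [← hasDerivWithinAt_univ (𝕜 := ℝ), ← Iic_union_Ici (a := s)]
      refine HasDerivWithinAt.union ?_ ?_
      · have h1 : HasDerivWithinAt f (f' s) (Iic s) s :=
          (hf s ⟨hT.le, le_rfl⟩).mono_of_mem_nhdsWithin
            (by rw [← nhdsWithin_Icc_eq_nhdsLE hT]; exact self_mem_nhdsWithin)
        refine h1.congr_of_eventuallyEq ?_ (hef_eq_f s ⟨hT.le, le_rfl⟩)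
        have hmem : Icc t₀ s ∈ 𝓝[Iic s] s := by
          rw [← nhdsWithin_Icc_eq_nhdsLE hT]; exact self_mem_nhdsWithin
        filter_upwards [hmem] with σ hσ
        exact hef_eq_f σ hσ
      · refine (hLa s s).hasDerivWithinAt.congr (fun y hy => hef_eq_L_ge s y hy) ?_
        exact hef_eq_L_ge s s le_rfl
    · -- T < s
      rw [hc, clampI_of_ge hT.le hs2.le]
      refine (hLa T s).congr_of_eventuallyEq ?_
      filter_upwards [Ioi_mem_nhds hs2] with σ hσ
      exact hef_eq_L_ge T σ (le_of_lt hσ)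

lemma quadG_sub (A B : Mat3) (p : V3) : quadG (A - B) p = quadG A p - quadG B p := by
  simp only [quadG_eq, Matrix.sub_apply, ← Finset.sum_sub_distrib]
  refine Finset.sum_congr rfl fun a _ => Finset.sum_congr rfl fun b _ => by ring

lemma abs_sub_clampI {t₀ T s t : ℝ} (hT : t₀ ≤ T) (ht : t ∈ Icc t₀ T) :
    |s - clampI t₀ T s| ≤ |s - t| := by
  rcases le_total s t₀ with h | h
  · rw [clampI_of_le hT h, abs_sub_comm, abs_of_nonneg (by linarith), abs_sub_comm]
    rw [abs_of_nonneg (by linarith [ht.1])]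
    linarith [ht.1]
  · rcases le_total T s with h2 | h2
    · rw [clampI_of_ge hT h2, abs_of_nonneg (by linarith), abs_of_nonneg (by linarith [ht.2])]
      linarith [ht.2]
    · rw [clampI_of_mem ⟨h, h2⟩, sub_self, abs_zero]
      exact abs_nonneg _

lemma continuous_quadG (G : Mat3) : Continuous (quadG G) := by
  rw [show quadG G = fun p => ∑ a, ∑ b, p a * (G a b * p b) from funext (quadG_eq G)]
  continuity

lemma continuous_p0 (G : Mat3) : Continuous (p0 G) :=
  Real.continuous_sqrt.comp (continuous_const.add (continuous_quadG G))

lemma p0_nonneg (G : Mat3) (p : V3) : 0 ≤ p0 G p := Real.sqrt_nonneg _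

lemma p0_upper {G : Mat3} {p : V3} {B : ℝ} (hB : 0 ≤ B)
    (h : |quadG G p| ≤ B * ∑ i, p i ^ 2) : p0 G p ≤ Real.sqrt (1 + B) * jap p := by
  rw [p0, jap, ← Real.sqrt_mul (by linarith)]
  apply Real.sqrt_le_sqrt
  have h1 := (abs_le.mp h).2
  have h2 := sq_sum_nonneg p
  nlinarith

lemma p0_lower {G : Mat3} {p : V3} {lam : ℝ} (hl0 : 0 < lam) (hl1 : lam ≤ 1)
    (h : lam * (∑ i, p i ^ 2) ≤ quadG G p) : Real.sqrt lam * jap p ≤ p0 G p := by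
  rw [p0, jap, ← Real.sqrt_mul hl0.le]
  apply Real.sqrt_le_sqrt
  have h2 := sq_sum_nonneg p
  nlinarith

lemma one_add_quad_pos {G : Mat3} {p : V3} {lam : ℝ} (hl0 : 0 < lam)
    (h : lam * (∑ i, p i ^ 2) ≤ quadG G p) : 0 < 1 + quadG G p := by
  have h2 := sq_sum_nonneg p
  nlinarith

lemma p0_pos {G : Mat3} {p : V3} {lam : ℝ} (hl0 : 0 < lam)
    (h : lam * (∑ i, p i ^ 2) ≤ quadG G p) : 0 < p0 G p :=
  Real.sqrt_pos.2 (one_add_quad_pos hl0 h)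

lemma hasDerivWithinAt_singleton' (f : ℝ → ℝ) (x d : ℝ) :
    HasDerivWithinAt f d {x} x := by
  rw [hasDerivWithinAt_iff_tendsto_slope]
  have : ({x} : Set ℝ) \ {x} = ∅ := Set.diff_self
  rw [this, nhdsWithin_empty]
  exact tendsto_bot

lemma hasDerivAt_det3 {e : Fin 3 → Fin 3 → ℝ → ℝ} {e' : Fin 3 → Fin 3 → ℝ} {t : ℝ}
    (h : ∀ a b, HasDerivAt (e a b) (e' a b) t) :
    HasDerivAt (fun s => (Matrix.of fun a b => e a b s).det)
      (∑ a, ∑ b, (Matrix.of fun a b => e a b t).adjugate b a * e' a b) t := by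
  have heq : (fun s => (Matrix.of fun a b => e a b s).det)
      = fun s => e 0 0 s * e 1 1 s * e 2 2 s - e 0 0 s * e 1 2 s * e 2 1 s
        - e 0 1 s * e 1 0 s * e 2 2 s + e 0 1 s * e 1 2 s * e 2 0 s
        + e 0 2 s * e 1 0 s * e 2 1 s - e 0 2 s * e 1 1 s * e 2 0 s := by
    funext s; rw [Matrix.det_fin_three]; rfl
  rw [heq]
  have hd := ((((((h 0 0).mul (h 1 1)).mul (h 2 2)).sub
      (((h 0 0).mul (h 1 2)).mul (h 2 1))).sub
      (((h 0 1).mul (h 1 0)).mul (h 2 2))).add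
      (((h 0 1).mul (h 1 2)).mul (h 2 0))).add
      (((h 0 2).mul (h 1 0)).mul (h 2 1)) |>.sub
      (((h 0 2).mul (h 1 1)).mul (h 2 0))
  refine hd.congr_deriv ?_
  simp only [Fin.sum_univ_three, Matrix.adjugate_fin_three, Matrix.of_apply,
    Matrix.cons_val', Matrix.cons_val_zero, Matrix.cons_val_one, Matrix.head_cons,
    Matrix.empty_val', Matrix.cons_val_fin_one, Matrix.head_fin_const, Matrix.cons_val_two,
    Matrix.tail_cons, Pi.mul_apply]
  ring

end Helpers

set_option maxHeartbeats 2000000 in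
/-- evolution of the energy density.  If `dg^{ab}/dt = −2k^{ab}`, `F ≥ 0` is
differentiable in `t` with derivative `F'`, dominated together with `F'` (after
multiplication by `⟨p⟩`) by an integrable function, and `∫ F'(t,p) p⁰ dp = 0`, then
`ρ(t) = √(det G(t)) ∫ F(t,p) p⁰(t,p) dp` is differentiable with
`dρ/dt = −kρ − k^{ab}S_{ab}`. -/
theorem stmt16 (t₀ T : ℝ) (hT : t₀ ≤ T)
    (g k : ℝ → Mat3)
    (hgpd : ∀ t ∈ Icc t₀ T, (g t).PosDef)
    (hksym : ∀ t ∈ Icc t₀ T, (k t).IsSymm)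
    (hkcont : ∀ a b : Fin 3, ContinuousOn (fun t => k t a b) (Icc t₀ T))
    (hgode : ∀ a b : Fin 3, ∀ t ∈ Icc t₀ T,
      HasDerivWithinAt (fun s => g s a b) (-2 * k t a b) (Icc t₀ T) t)
    (F F' : ℝ → V3 → ℝ)
    (hFpos : ∀ t ∈ Icc t₀ T, ∀ p, 0 ≤ F t p)
    (hFmeas : ∀ t ∈ Icc t₀ T, Measurable (F t))
    (hF'meas : ∀ t ∈ Icc t₀ T, Measurable (F' t))
    (hFt : ∀ p : V3, ∀ t ∈ Icc t₀ T,
      HasDerivWithinAt (fun s => F s p) (F' t p) (Icc t₀ T) t)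
    (hdom : ∃ φ : V3 → ℝ, Integrable φ ∧ ∀ t ∈ Icc t₀ T, ∀ p : V3,
      jap p * |F t p| ≤ φ p ∧ jap p * |F' t p| ≤ φ p)
    (hzero : ∀ t ∈ Icc t₀ T, ∫ p : V3, F' t p * p0 (g t) p = 0) :
    ∀ t ∈ Icc t₀ T,
      HasDerivWithinAt (fun s => rhoF (g s) (F s))
        (-(trK (g t) (k t)) * rhoF (g t) (F t)
          - ∑ a, ∑ b, k t a b * SlowF (g t) (F t) a b) (Icc t₀ T) t := by
  intro t ht
  rcases eq_or_lt_of_le hT with rfl | hTlt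
  · have ht0 : t = t₀ := le_antisymm ht.2 ht.1
    subst ht0
    rw [Icc_self]
    exact hasDerivWithinAt_singleton' _ _ _
  obtain ⟨φ, hφint, hφ⟩ := hdom
  have hφnn : ∀ p, 0 ≤ φ p := fun p =>
    le_trans (mul_nonneg (jap_pos p).le (abs_nonneg _)) (hφ t ht p).1
  set c : ℝ → ℝ := clampI t₀ T with hc
  have hcm : ∀ s, c s ∈ Icc t₀ T := clampI_mem hT
  have hct : c t = t := clampI_of_mem ht
  set eg : ℝ → Mat3 := fun s => Matrix.of fun a b =>
    g (c s) a b + (s - c s) * (-2 * k (c s) a b) with heg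
  set eF : ℝ → V3 → ℝ := fun s p => F (c s) p + (s - c s) * F' (c s) p with heF
  have hegIcc : ∀ s ∈ Icc t₀ T, eg s = g s := by
    intro s hs
    have hcs : c s = s := clampI_of_mem hs
    ext a b; simp [heg, hcs]
  have hegt : eg t = g t := hegIcc t ht
  have heFIcc : ∀ s ∈ Icc t₀ T, eF s = F s := by
    intro s hs
    have hcs : c s = s := clampI_of_mem hs
    funext p; simp [heF, hcs]
  have heFt : eF t = F t := heFIcc t ht
  have hegd : ∀ (a b : Fin 3) (s : ℝ), HasDerivAt (fun σ => eg σ a b) (-2 * k (c s) a b) s :=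
    fun a b s => extDeriv' hTlt (fun σ => g σ a b) (fun τ => -2 * k τ a b) (hgode a b) s
  have heFd : ∀ (p : V3) (s : ℝ), HasDerivAt (fun σ => eF σ p) (F' (c s) p) s :=
    fun p s => extDeriv' hTlt (fun σ => F σ p) (fun τ => F' τ p) (hFt p) s
  -- constants
  obtain ⟨lam₀, hlam₀, hquadlow₀⟩ := posdef_lower (hgpd t ht)
  set lam : ℝ := min lam₀ 1 with hlamdef
  have hlam : 0 < lam := lt_min hlam₀ one_pos
  have hlam1 : lam ≤ 1 := min_le_right _ _
  have hquadlow : ∀ p : V3, lam * (∑ i, p i ^ 2) ≤ quadG (g t) p := fun p =>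
    le_trans (mul_le_mul_of_nonneg_right (min_le_left _ _) (sq_sum_nonneg p)) (hquadlow₀ p)
  -- bound on k over Icc
  obtain ⟨Mk₀, hMk₀⟩ := isCompact_Icc.exists_bound_of_continuousOn
    (f := fun τ => ∑ a, ∑ b, |k τ a b|)
    (continuousOn_finset_sum _ fun a _ => continuousOn_finset_sum _ fun b _ => (hkcont a b).abs)
  set Mk : ℝ := max Mk₀ 0 with hMkdef
  have hMknn : 0 ≤ Mk := le_max_right _ _
  have hMk : ∀ τ ∈ Icc t₀ T, (∑ a, ∑ b, |k τ a b|) ≤ Mk := fun τ hτ =>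
    le_trans (le_trans (le_abs_self _) (by simpa using hMk₀ τ hτ)) (le_max_left _ _)
  set Bg : ℝ := (∑ a, ∑ b, |g t a b|) + lam / 2 with hBgdef
  have hBgnn : 0 ≤ Bg := by
    have : (0:ℝ) ≤ ∑ a, ∑ b, |g t a b| :=
      Finset.sum_nonneg fun a _ => Finset.sum_nonneg fun b _ => abs_nonneg _
    simp only [hBgdef]; linarith
  -- choose ε
  have hG1 : Tendsto (fun s => ∑ a, ∑ b, |eg s a b - g t a b|) (𝓝 t) (𝓝 0) := by
    have h0 : (0:ℝ) = ∑ a : Fin 3, ∑ b : Fin 3, (0:ℝ) := by simp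
    rw [h0]
    refine tendsto_finset_sum _ fun a _ => ?_
    refine tendsto_finset_sum _ fun b _ => ?_
    have h1 : Tendsto (fun s => eg s a b - g t a b) (𝓝 t) (𝓝 0) := by
      have := ((hegd a b t).continuousAt).tendsto
      have h2 : eg t a b = g t a b := by rw [hegt]
      simpa [h2] using this.sub_const (g t a b)
    simpa using h1.abs
  have hev : ∀ᶠ s in 𝓝 t, (∑ a, ∑ b, |eg s a b - g t a b|) < lam / 2 :=
    hG1.eventually_lt_const (by positivity)
  obtain ⟨ε₀, hε₀, hball₀⟩ := Metric.eventually_nhds_iff.mp hev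
  set ε : ℝ := min ε₀ 1 with hεdef
  have hε : 0 < ε := lt_min hε₀ one_pos
  have hε1 : ε ≤ 1 := min_le_right _ _
  have hdiffsmall : ∀ s ∈ Metric.ball t ε, (∑ a, ∑ b, |eg s a b - g t a b|) ≤ lam / 2 := by
    intro s hs
    exact (hball₀ (lt_of_lt_of_le (Metric.mem_ball.mp hs) (min_le_left _ _))).le
  -- quadratic form bounds on the ball
  have hqlow : ∀ s ∈ Metric.ball t ε, ∀ p : V3,
      lam / 2 * (∑ i, p i ^ 2) ≤ quadG (eg s) p := by
    intro s hs p
    have h1 : |quadG (eg s - g t) p| ≤ (lam / 2) * (∑ i, p i ^ 2) := by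
      refine le_trans (abs_quadG_le _ p) ?_
      refine mul_le_mul_of_nonneg_right ?_ (sq_sum_nonneg p)
      simpa [Matrix.sub_apply] using hdiffsmall s hs
    have h2 := hquadlow p
    have h3 := quadG_sub (eg s) (g t) p
    have h4 := (abs_le.mp h1).1
    nlinarith [sq_sum_nonneg p]
  have hqabs : ∀ s ∈ Metric.ball t ε, ∀ p : V3, |quadG (eg s) p| ≤ Bg * (∑ i, p i ^ 2) := by
    intro s hs p
    have h1 : |quadG (eg s - g t) p| ≤ (lam / 2) * (∑ i, p i ^ 2) := by
      refine le_trans (abs_quadG_le _ p) ?_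
      refine mul_le_mul_of_nonneg_right ?_ (sq_sum_nonneg p)
      simpa [Matrix.sub_apply] using hdiffsmall s hs
    have h2 : |quadG (g t) p| ≤ (∑ a, ∑ b, |g t a b|) * (∑ i, p i ^ 2) := abs_quadG_le _ p
    have h3 := quadG_sub (eg s) (g t) p
    have h4 := abs_sub_abs_le_abs_sub (quadG (eg s) p) (quadG (g t) p)
    simp only [hBgdef]
    have h5 : |quadG (eg s) p - quadG (g t) p| ≤ lam / 2 * (∑ i, p i ^ 2) := by
      rw [← h3]; exact h1
    have h6 := abs_sub_abs_le_abs_sub (quadG (eg s) p) (quadG (g t) p)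
    nlinarith [sq_sum_nonneg p, abs_nonneg (quadG (eg s) p)]
  have hqk : ∀ s ∈ Metric.ball t ε, ∀ p : V3,
      |quadG (k (c s)) p| ≤ Mk * (∑ i, p i ^ 2) := by
    intro s _ p
    refine le_trans (abs_quadG_le _ p) ?_
    exact mul_le_mul_of_nonneg_right (hMk _ (hcm s)) (sq_sum_nonneg p)
  set D : ℝ := Real.sqrt (lam / 2) with hDdef
  have hD : 0 < D := Real.sqrt_pos.2 (by positivity)
  set CU : ℝ := Real.sqrt (1 + Bg) with hCUdef
  have hCU : 0 < CU := Real.sqrt_pos.2 (by linarith)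
  have hp0up : ∀ s ∈ Metric.ball t ε, ∀ p : V3, p0 (eg s) p ≤ CU * jap p :=
    fun s hs p => p0_upper hBgnn (hqabs s hs p)
  have hp0low : ∀ s ∈ Metric.ball t ε, ∀ p : V3, D * jap p ≤ p0 (eg s) p :=
    fun s hs p => p0_lower (by positivity) (by linarith) (hqlow s hs p)
  have hp0pos : ∀ s ∈ Metric.ball t ε, ∀ p : V3, 0 < p0 (eg s) p :=
    fun s hs p => p0_pos (by positivity) (hqlow s hs p)
  have h1q : ∀ s ∈ Metric.ball t ε, ∀ p : V3, 0 < 1 + quadG (eg s) p :=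
    fun s hs p => one_add_quad_pos (by positivity : (0:ℝ) < lam / 2) (hqlow s hs p)
  have hscl : ∀ s ∈ Metric.ball t ε, |s - c s| ≤ 1 := by
    intro s hs
    refine le_trans (abs_sub_clampI hT ht) ?_
    have := Metric.mem_ball.mp hs
    rw [Real.dist_eq] at this
    linarith
  -- definitions of the integrand and its derivative
  set eH : ℝ → V3 → ℝ := fun s p => eF s p * p0 (eg s) p with heH
  set eH' : ℝ → V3 → ℝ := fun s p =>
    F' (c s) p * p0 (eg s) p - eF s p * (quadG (k (c s)) p / p0 (eg s) p) with heH'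
  -- differentiability in s on the ball
  have hHd : ∀ (p : V3), ∀ s ∈ Metric.ball t ε, HasDerivAt (fun σ => eH σ p) (eH' s p) s := by
    intro p s hs
    have hq : HasDerivAt (fun σ => quadG (eg σ) p) (-2 * quadG (k (c s)) p) s := by
      have h2 : HasDerivAt (fun σ => ∑ a, ∑ b, p a * (eg σ a b * p b))
          (∑ a, ∑ b, p a * (-2 * k (c s) a b * p b)) s :=
        HasDerivAt.fun_sum fun a _ => HasDerivAt.fun_sum fun b _ =>
          (((hegd a b s).mul_const (p b)).const_mul (p a))
      have h3 : (∑ a, ∑ b, p a * (-2 * k (c s) a b * p b)) = -2 * quadG (k (c s)) p := by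
        rw [quadG_eq, Finset.mul_sum]
        refine Finset.sum_congr rfl fun a _ => ?_
        rw [Finset.mul_sum]
        exact Finset.sum_congr rfl fun b _ => by ring
      rw [show (fun σ => quadG (eg σ) p) = fun σ => ∑ a, ∑ b, p a * (eg σ a b * p b)
        from funext fun σ => quadG_eq _ p]
      rw [← h3]
      exact h2
    have hp0d : HasDerivAt (fun σ => p0 (eg σ) p)
        (-2 * quadG (k (c s)) p / (2 * p0 (eg s) p)) s := by
      have h4 := (hq.const_add 1).sqrt (ne_of_gt (h1q s hs p))
      exact h4
    have h5 := (heFd p s).mul hp0d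
    have h6 : F' (c s) p * p0 (eg s) p
        + eF s p * (-2 * quadG (k (c s)) p / (2 * p0 (eg s) p)) = eH' s p := by
      simp only [heH']
      have h7 : -2 * quadG (k (c s)) p / (2 * p0 (eg s) p)
          = -(quadG (k (c s)) p / p0 (eg s) p) := by
        rw [neg_mul, neg_div, mul_div_mul_left _ _ (two_ne_zero)]
      rw [h7]; ring
    rw [← h6]
    exact h5
  -- bounds
  have hbound : ∀ (p : V3), ∀ s ∈ Metric.ball t ε,
      |eH' s p| ≤ (CU + 2 * (Mk / D)) * φ p := by
    intro p s hs
    have hjp := jap_pos p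
    have hF'b : |F' (c s) p| * jap p ≤ φ p := by
      rw [mul_comm]; exact (hφ (c s) (hcm s) p).2
    have hFb : |F (c s) p| * jap p ≤ φ p := by
      rw [mul_comm]; exact (hφ (c s) (hcm s) p).1
    have hup := hp0up s hs p
    have hlow := hp0low s hs p
    have hq := hqk s hs p
    have hsc := hscl s hs
    have hpos := hp0pos s hs p
    have hjap2 : (∑ i, p i ^ 2) ≤ jap p ^ 2 := by rw [jap_sq]; linarith
    -- |q| / p0 ≤ (Mk / D) * jap p
    have hdivb : |quadG (k (c s)) p| / p0 (eg s) p ≤ (Mk / D) * jap p := by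
      have h1 : |quadG (k (c s)) p| / p0 (eg s) p ≤ |quadG (k (c s)) p| / (D * jap p) := by
        apply div_le_div_of_nonneg_left (abs_nonneg _) (by positivity) hlow
      refine le_trans h1 ?_
      rw [div_le_iff₀ (by positivity)]
      have h2 : |quadG (k (c s)) p| ≤ Mk * jap p ^ 2 := by
        refine le_trans hq ?_
        exact mul_le_mul_of_nonneg_left hjap2 hMknn
      calc |quadG (k (c s)) p| ≤ Mk * jap p ^ 2 := h2
        _ = Mk / D * jap p * (D * jap p) := by field_simp
    have heFb : |eF s p| ≤ 2 * (φ p / jap p) := by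
      simp only [heF]
      refine le_trans (abs_add_le _ _) ?_
      have h1 : |F (c s) p| ≤ φ p / jap p := by
        rw [le_div_iff₀ hjp]; exact hFb
      have h2 : |(s - c s) * F' (c s) p| ≤ φ p / jap p := by
        rw [abs_mul]
        refine le_trans (mul_le_mul_of_nonneg_right hsc (abs_nonneg _)) ?_
        rw [one_mul, le_div_iff₀ hjp]; exact hF'b
      linarith
    have hterm1 : |F' (c s) p * p0 (eg s) p| ≤ CU * φ p := by
      rw [abs_mul, abs_of_nonneg (p0_nonneg _ _)]
      calc |F' (c s) p| * p0 (eg s) p ≤ |F' (c s) p| * (CU * jap p) :=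
          mul_le_mul_of_nonneg_left hup (abs_nonneg _)
        _ = CU * (|F' (c s) p| * jap p) := by ring
        _ ≤ CU * φ p := mul_le_mul_of_nonneg_left hF'b hCU.le
    have hterm2 : |eF s p * (quadG (k (c s)) p / p0 (eg s) p)| ≤ 2 * (Mk / D) * φ p := by
      rw [abs_mul, abs_div, abs_of_nonneg (p0_nonneg _ _)]
      calc |eF s p| * (|quadG (k (c s)) p| / p0 (eg s) p)
          ≤ (2 * (φ p / jap p)) * ((Mk / D) * jap p) := by
            have hnn1 : 0 ≤ |quadG (k (c s)) p| / p0 (eg s) p :=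
              div_nonneg (abs_nonneg _) (p0_nonneg _ _)
            have hnn2 : (0:ℝ) ≤ 2 * (φ p / jap p) := by
              have := hφnn p; have := jap_pos p; positivity
            exact mul_le_mul heFb hdivb hnn1 hnn2
        _ = 2 * (Mk / D) * φ p := by field_simp
    simp only [heH']
    calc |F' (c s) p * p0 (eg s) p - eF s p * (quadG (k (c s)) p / p0 (eg s) p)|
        ≤ |F' (c s) p * p0 (eg s) p| + |eF s p * (quadG (k (c s)) p / p0 (eg s) p)| :=
          abs_sub _ _
      _ ≤ CU * φ p + 2 * (Mk / D) * φ p := add_le_add hterm1 hterm2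
      _ = (CU + 2 * (Mk / D)) * φ p := by ring
  -- measurability
  have hmeasH : ∀ s : ℝ, AEStronglyMeasurable (eH s) volume := by
    intro s
    refine Measurable.aestronglyMeasurable ?_
    refine Measurable.mul ?_ (continuous_p0 (eg s)).measurable
    exact (hFmeas (c s) (hcm s)).add ((hF'meas (c s) (hcm s)).const_mul (s - c s))
  have hmeasH' : AEStronglyMeasurable (eH' t) volume := by
    refine Measurable.aestronglyMeasurable ?_
    refine Measurable.sub ?_ ?_
    · exact (hF'meas (c t) (hcm t)).mul (continuous_p0 (eg t)).measurable
    · refine Measurable.mul ?_ ?_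
      · exact (hFmeas (c t) (hcm t)).add ((hF'meas (c t) (hcm t)).const_mul (t - c t))
      · exact ((continuous_quadG (k (c t))).measurable).div (continuous_p0 (eg t)).measurable
  have htball : t ∈ Metric.ball t ε := Metric.mem_ball_self hε
  have hintH : Integrable (eH t) := by
    refine Integrable.mono' (hφint.const_mul CU) (hmeasH t) (ae_of_all _ fun p => ?_)
    rw [Real.norm_eq_abs]
    simp only [heH, heFt, hegt]
    rw [abs_mul, abs_of_nonneg (p0_nonneg _ _)]
    have h1 : |F t p| * p0 (g t) p ≤ |F t p| * (CU * jap p) := by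
      refine mul_le_mul_of_nonneg_left ?_ (abs_nonneg _)
      have := hp0up t htball p
      rwa [hegt] at this
    refine le_trans h1 ?_
    rw [show |F t p| * (CU * jap p) = CU * (jap p * |F t p|) by ring]
    exact mul_le_mul_of_nonneg_left (hφ t ht p).1 hCU.le
  -- differentiate under the integral sign
  obtain ⟨hintH', hderivI⟩ := hasDerivAt_integral_of_dominated_loc_of_deriv_le (Metric.ball_mem_nhds t hε)
    (Eventually.of_forall hmeasH) hintH hmeasH'
    (ae_of_all _ fun p => fun s hs => by
      rw [Real.norm_eq_abs]; exact hbound p s hs)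
    (hφint.const_mul (CU + 2 * (Mk / D)))
    (ae_of_all _ fun p => fun s hs => hHd p s hs)
  -- compute the integral of eH' t
  set J : Fin 3 → Fin 3 → ℝ := fun a b => ∫ p : V3, F t p * (p a * p b / p0 (g t) p) with hJ
  have hJint : ∀ a b : Fin 3, Integrable (fun p : V3 => F t p * (p a * p b / p0 (g t) p)) := by
    intro a b
    refine Integrable.mono' (hφint.const_mul (1 / D)) ?_ (ae_of_all _ fun p => ?_)
    · exact (((hFmeas t ht).mul (((measurable_pi_apply a).mul (measurable_pi_apply b)).div
        (continuous_p0 (g t)).measurable))).aestronglyMeasurable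
    · rw [Real.norm_eq_abs, abs_mul, abs_div]
      have hjp := jap_pos p
      have hlow : D * jap p ≤ p0 (g t) p := by
        have := hp0low t htball p; rwa [hegt] at this
      have hpos : 0 < p0 (g t) p := lt_of_lt_of_le (by positivity) hlow
      rw [abs_of_nonneg hpos.le]
      have h1 : |p a * p b| ≤ jap p ^ 2 := by
        refine le_trans (abs_mul_le_sum_sq p a b) ?_
        rw [jap_sq]; linarith
      have h2 : |p a * p b| / p0 (g t) p ≤ jap p / D := by
        rw [div_le_div_iff₀ hpos hD]
        calc |p a * p b| * D ≤ jap p ^ 2 * D := mul_le_mul_of_nonneg_right h1 hD.le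
          _ = jap p * (D * jap p) := by ring
          _ ≤ jap p * p0 (g t) p := mul_le_mul_of_nonneg_left hlow hjp.le
      calc |F t p| * (|p a * p b| / p0 (g t) p) ≤ |F t p| * (jap p / D) :=
          mul_le_mul_of_nonneg_left h2 (abs_nonneg _)
        _ = 1 / D * (jap p * |F t p|) := by field_simp
        _ ≤ 1 / D * φ p := mul_le_mul_of_nonneg_left (hφ t ht p).1 (by positivity)
  have hi1 : Integrable (fun p : V3 => F' t p * p0 (g t) p) := by
    refine Integrable.mono' (hφint.const_mul CU) ?_ (ae_of_all _ fun p => ?_)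
    · exact ((hF'meas t ht).mul (continuous_p0 (g t)).measurable).aestronglyMeasurable
    · rw [Real.norm_eq_abs, abs_mul, abs_of_nonneg (p0_nonneg _ _)]
      have hup : p0 (g t) p ≤ CU * jap p := by
        have := hp0up t htball p; rwa [hegt] at this
      calc |F' t p| * p0 (g t) p ≤ |F' t p| * (CU * jap p) :=
          mul_le_mul_of_nonneg_left hup (abs_nonneg _)
        _ = CU * (jap p * |F' t p|) := by ring
        _ ≤ CU * φ p := mul_le_mul_of_nonneg_left (hφ t ht p).2 hCU.le
  have hsplit2 : (fun p : V3 => F t p * (quadG (k t) p / p0 (g t) p))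
      = fun p => ∑ a, ∑ b, k t a b * (F t p * (p a * p b / p0 (g t) p)) := by
    funext p
    rw [quadG_eq, Finset.sum_div, Finset.mul_sum]
    refine Finset.sum_congr rfl fun a _ => ?_
    rw [Finset.sum_div, Finset.mul_sum]
    exact Finset.sum_congr rfl fun b _ => by ring
  have hi2 : Integrable (fun p : V3 => F t p * (quadG (k t) p / p0 (g t) p)) := by
    rw [hsplit2]
    exact integrable_finset_sum _ fun a _ => integrable_finset_sum _ fun b _ =>
      (hJint a b).const_mul _
  have hintval : (∫ p : V3, eH' t p) = -∑ a, ∑ b, k t a b * J a b := by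
    have h1 : (fun p : V3 => eH' t p)
        = fun p => F' t p * p0 (g t) p - F t p * (quadG (k t) p / p0 (g t) p) := by
      funext p
      simp only [heH', hct, hegt, heFt]
    rw [h1, integral_sub hi1 hi2, hzero t ht, zero_sub, neg_inj]
    rw [hsplit2, integral_finset_sum _ fun a _ => integrable_finset_sum _ fun b _ =>
      (hJint a b).const_mul (k t a b)]
    refine Finset.sum_congr rfl fun a _ => ?_
    rw [integral_finset_sum _ fun b _ => (hJint a b).const_mul (k t a b)]
    exact Finset.sum_congr rfl fun b _ => integral_const_mul _ _
  -- determinant part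
  have hdetpos : (0:ℝ) < (g t).det := (hgpd t ht).det_pos
  have hdet : HasDerivAt (fun s => (eg s).det)
      (∑ a, ∑ b, (g t).adjugate b a * (-2 * k t a b)) t := by
    have h1 := hasDerivAt_det3
      (e := fun a b s => g (c s) a b + (s - c s) * (-2 * k (c s) a b))
      (e' := fun a b => -2 * k (c t) a b) (fun a b => hegd a b t)
    have h2 : (Matrix.of fun a b => g (c t) a b + (t - c t) * (-2 * k (c t) a b)) = g t := by
      ext a b; simp [hct]
    rw [h2, hct] at h1
    exact h1
  have hgsymm : ∀ a b : Fin 3, g t a b = g t b a := by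
    intro a b
    have h := (hgpd t ht).1
    have := congrFun (congrFun h.eq a) b
    simpa [Matrix.conjTranspose_apply] using this.symm
  have hadjsymm : ∀ a b : Fin 3, (g t).adjugate b a = (g t).adjugate a b := by
    intro a b
    have h1 : (g t)ᵀ = g t := by ext i j; rw [Matrix.transpose_apply]; exact hgsymm j i
    have h2 : ((g t).adjugate)ᵀ = (g t).adjugate := by
      rw [Matrix.adjugate_transpose, h1]
    have := congrFun (congrFun h2 a) b
    simpa [Matrix.transpose_apply] using this
  have hinvapp : ∀ a b : Fin 3, (g t)⁻¹ a b = ((g t).det)⁻¹ * (g t).adjugate a b := by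
    intro a b
    rw [Matrix.inv_def, Ring.inverse_eq_inv']
    simp [Matrix.smul_apply]
  have hdetval : (∑ a, ∑ b, (g t).adjugate b a * (-2 * k t a b))
      = -2 * trK (g t) (k t) * (g t).det := by
    rw [trK]
    rw [Finset.mul_sum, Finset.sum_mul]
    refine Finset.sum_congr rfl fun a _ => ?_
    rw [Finset.mul_sum, Finset.sum_mul]
    refine Finset.sum_congr rfl fun b _ => ?_
    rw [hinvapp a b, hadjsymm a b]
    have hdne : (g t).det ≠ 0 := ne_of_gt hdetpos
    field_simp [hdne]
  have hsd : HasDerivAt (fun s => Real.sqrt (eg s).det)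
      (-(trK (g t) (k t)) * Real.sqrt (g t).det) t := by
    have h1 : (fun s => (eg s).det) t ≠ 0 := by
      simp only [hegt]; exact ne_of_gt hdetpos
    have h2 := hdet.sqrt h1
    simp only [hegt] at h2
    have h3 : (∑ a, ∑ b, (g t).adjugate b a * (-2 * k t a b)) / (2 * Real.sqrt (g t).det)
        = -(trK (g t) (k t)) * Real.sqrt (g t).det := by
      rw [hdetval]
      have hsq : Real.sqrt (g t).det * Real.sqrt (g t).det = (g t).det :=
        Real.mul_self_sqrt hdetpos.le
      have hsqpos : 0 < Real.sqrt (g t).det := Real.sqrt_pos.2 hdetpos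
      rw [div_eq_iff (by positivity)]
      linear_combination (2 * trK (g t) (k t)) * hsq
    rw [h3] at h2
    exact h2
  -- assemble
  have hfull := hsd.mul hderivI
  have hIt : (∫ p : V3, eH t p) = ∫ p : V3, F t p * p0 (g t) p := by
    refine integral_congr_ae (ae_of_all _ fun p => ?_)
    simp only [heH, heFt, hegt]
  have hval : (-(trK (g t) (k t)) * Real.sqrt (g t).det) * (∫ p : V3, eH t p)
      + Real.sqrt (eg t).det * (∫ p : V3, eH' t p)
      = -(trK (g t) (k t)) * rhoF (g t) (F t)
        - ∑ a, ∑ b, k t a b * SlowF (g t) (F t) a b := by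
    rw [hIt, hintval, hegt, rhoF]
    have hS : ∀ a b : Fin 3, SlowF (g t) (F t) a b = Real.sqrt (g t).det * J a b := fun a b => rfl
    have h1 : (∑ a, ∑ b, k t a b * SlowF (g t) (F t) a b)
        = Real.sqrt (g t).det * ∑ a, ∑ b, k t a b * J a b := by
      rw [Finset.mul_sum]
      refine Finset.sum_congr rfl fun a _ => ?_
      rw [Finset.mul_sum]
      refine Finset.sum_congr rfl fun b _ => ?_
      rw [hS a b]; ring
    rw [h1]
    ring
  have hfinal : HasDerivAt (fun s => Real.sqrt (eg s).det * ∫ p : V3, eH s p)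
      (-(trK (g t) (k t)) * rhoF (g t) (F t)
        - ∑ a, ∑ b, k t a b * SlowF (g t) (F t) a b) t := by
    rw [← hval]
    exact hfull
  refine (hfinal.hasDerivWithinAt).congr ?_ ?_
  · intro y hy
    rw [rhoF, hegIcc y hy]
    congr 1
    refine integral_congr_ae (ae_of_all _ fun p => ?_)
    simp only [heH, heFIcc y hy, hegIcc y hy]
  · rw [rhoF, hegt]
    congr 1
    exact hIt.symm
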